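/- Let A be a unital complex star-algebra, σ : ℝ → Aut(A) a one-parameter group of star-automorphisms, and let λ, δ : ℝ → A be commuting one-parameter groups of unitaries (λ(s)δ(t) = δ(t)λ(s) for all s,t) such that σ_t(δ(s)) = λ(st)·δ(s) for all s,t ∈ ℝ. Then σ_t(λ(s)) = λ(s) for all s,t ∈ ℝ, i.e., λ is invariant under σ. -/
import Mathlib


theorem relative_invariance_forces_invariance_of_lambda {A : Type*} [Ring A] [StarRing A]
    [Algebra ℂ A] [StarModule ℂ A]
    (σ : ℝ → A ≃⋆ₐ[ℂ] A) (hσ : ∀ (s t : ℝ) (x : A), σ (s + t) x = σ s (σ t x))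
    (lam δ : ℝ → A)
    (hl : ∀ s t : ℝ, lam (s + t) = lam s * lam t) (hl0 : lam 0 = 1)
    (hls : ∀ t : ℝ, star (lam t) = lam (-t))
    (hd : ∀ s t : ℝ, δ (s + t) = δ s * δ t) (hd0 : δ 0 = 1)
    (hds : ∀ t : ℝ, star (δ t) = δ (-t))
    (hcomm : ∀ s t : ℝ, lam s * δ t = δ t * lam s)
    (hrel : ∀ s t : ℝ, σ t (δ s) = lam (s * t) * δ s) :
    ∀ s t : ℝ, σ t (lam s) = lam s := by
  have hunit_l : ∀ r : ℝ, lam r * lam (-r) = 1 := fun r => by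
    rw [← hl, add_neg_cancel, hl0]
  have hunit_d : ∀ r : ℝ, δ r * δ (-r) = 1 := fun r => by
    rw [← hd, add_neg_cancel, hd0]
  have key : ∀ s t t' : ℝ, σ t' (lam (s * t)) = lam (s * t) := by
    intro s t t'
    have e1 : σ (t' + t) (δ s) = lam (s * t') * (lam (s * t) * δ s) := by
      rw [hrel, mul_add, hl, mul_assoc]
    have e2 : σ (t' + t) (δ s) = σ t' (lam (s * t)) * (lam (s * t') * δ s) := by
      rw [hσ, hrel s t, map_mul, hrel s t']
    have e3 : σ t' (lam (s * t)) * (lam (s * t') * δ s) = lam (s * t') * (lam (s * t) * δ s) :=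
      e2.symm.trans e1
    have e4 := congrArg (· * δ (-s)) e3
    simp only [mul_assoc, hunit_d, mul_one] at e4
    have e5 := congrArg (· * lam (-(s * t'))) e4
    simp only [mul_assoc, hunit_l, mul_one] at e5
    rw [e5, ← hl, ← hl]
    ring_nf
  intro s t
  have h := key s 1 t
  rwa [mul_one] at h
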